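/- Let C ⊆ F_q^n be a code of size M with minimum b-symbol distance d, and let C_H be the concatenation of C with the q-ary simplex code of parameters [(q^b-1)/(q-1), b, q^{b-1}]: C_H = {(Φ(c̄_0), ..., Φ(c̄_{n-1})) : c ∈ C}, where c̄_i = (c_i,...,c_{i+b-1}) (indices mod n) and Φ(x) = x·G_s for a generator matrix G_s of the simplex code. Then C_H is a code over F_q of length (q^b-1)n/(q-1), size M, and minimum Hamming distance q^{b-1}·d. -/

import Mathlib

open Finset

/-- Cyclic coordinate access: `cget z k` is the coordinate `z_k`, indices taken mod `n`. -/
def cget {Fq : Type*} [Zero Fq] {n : ℕ} (y : Fin n → Fq) (k : ℕ) : Fq :=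
  if h : n = 0 then 0 else y ⟨k % n, Nat.mod_lt k (Nat.pos_of_ne_zero h)⟩

/-- The `b`-symbol weight of a vector `y ∈ Fq^n`. -/
def wtb {Fq : Type*} [Zero Fq] [DecidableEq Fq] {n : ℕ} (b : ℕ) (y : Fin n → Fq) : ℕ :=
  ((Finset.range n).filter fun i => ∃ j : Fin b, cget y (i + j) ≠ 0).card

/-- The `b`-symbol distance on `Fq^n`. -/
def db {Fq : Type*} [Field Fq] [DecidableEq Fq] {n : ℕ} (b : ℕ) (x y : Fin n → Fq) : ℕ :=
  wtb b (x - y)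


lemma cget_fin {Fq : Type*} [Zero Fq] {n : ℕ} (y : Fin n → Fq) (i : Fin n) :
    cget y i = y i := by
  have hn : n ≠ 0 := Nat.pos_iff_ne_zero.mp i.pos
  simp [cget, hn, Nat.mod_eq_of_lt i.2]

lemma cget_sub {Fq : Type*} [Field Fq] {n : ℕ} (x y : Fin n → Fq) (k : ℕ) :
    cget (x - y) k = cget x k - cget y k := by
  unfold cget; split <;> simp

lemma eq_of_wtb_eq_zero {Fq : Type*} [Field Fq] [DecidableEq Fq] {n b : ℕ} (hb1 : 1 ≤ b)
    (z : Fin n → Fq) (h : wtb b z = 0) : z = 0 := by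
  funext i
  by_contra hzi
  have hmem : (i : ℕ) ∈ (Finset.range n).filter fun i => ∃ j : Fin b, cget z (i + j) ≠ 0 := by
    refine Finset.mem_filter.mpr ⟨Finset.mem_range.mpr i.2, ⟨⟨0, hb1⟩, ?_⟩⟩
    have h0 : ((i : ℕ) + ((⟨0, hb1⟩ : Fin b) : ℕ)) = (i : ℕ) := by simp
    rw [h0, cget_fin]
    simpa using hzi
  rw [Finset.card_eq_zero.mp h] at hmem
  exact absurd hmem (Finset.notMem_empty _)

lemma dist_key {Fq : Type*} [Field Fq] [Fintype Fq] [DecidableEq Fq]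
    {n b N : ℕ}
    (G : Fin b → Fin N → Fq)
    (hwt : ∀ x : Fin b → Fq, x ≠ 0 →
      hammingNorm (fun j : Fin N => ∑ i : Fin b, x i * G i j) = Fintype.card Fq ^ (b - 1))
    (x y : Fin n → Fq) :
    hammingDist (fun p : Fin n × Fin N => ∑ i : Fin b, cget x ((p.1 : ℕ) + i) * G i p.2)
      (fun p : Fin n × Fin N => ∑ i : Fin b, cget y ((p.1 : ℕ) + i) * G i p.2)
      = Fintype.card Fq ^ (b - 1) * db b x y := by
  classical
  set z := x - y with hz
  have hsub : ((fun p : Fin n × Fin N => ∑ i : Fin b, cget x ((p.1 : ℕ) + i) * G i p.2)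
      - fun p : Fin n × Fin N => ∑ i : Fin b, cget y ((p.1 : ℕ) + i) * G i p.2)
      = fun p : Fin n × Fin N => ∑ i : Fin b, cget z ((p.1 : ℕ) + i) * G i p.2 := by
    funext p
    simp only [Pi.sub_apply, ← Finset.sum_sub_distrib]
    exact Finset.sum_congr rfl fun i _ => by rw [hz, cget_sub, sub_mul]
  rw [hammingDist_comm, hammingDist_eq_hammingNorm, neg_add_eq_sub, hsub]
  have hprod : hammingNorm (fun p : Fin n × Fin N => ∑ i : Fin b, cget z ((p.1 : ℕ) + i) * G i p.2)
      = ∑ i : Fin n, hammingNorm (fun j : Fin N => ∑ k : Fin b, cget z ((i : ℕ) + k) * G k j) := by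
    simp only [hammingNorm, Finset.card_filter, Fintype.sum_prod_type]
  rw [hprod]
  have hnorm : ∀ i : Fin n,
      hammingNorm (fun j : Fin N => ∑ k : Fin b, cget z ((i : ℕ) + k) * G k j)
      = if (∃ k : Fin b, cget z ((i : ℕ) + k) ≠ 0) then Fintype.card Fq ^ (b - 1) else 0 := by
    intro i
    by_cases h : ∃ k : Fin b, cget z ((i : ℕ) + k) ≠ 0
    · rw [if_pos h]
      exact hwt _ (by
        intro h0
        obtain ⟨k, hk⟩ := h
        exact hk (congrFun h0 k))
    · rw [if_neg h]
      push_neg at h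
      simp [hammingNorm, h]
  simp only [hnorm]
  have hmul : (∑ i : Fin n, if (∃ k : Fin b, cget z ((i : ℕ) + k) ≠ 0)
        then Fintype.card Fq ^ (b - 1) else 0)
      = Fintype.card Fq ^ (b - 1) *
        ∑ i : Fin n, if (∃ k : Fin b, cget z ((i : ℕ) + k) ≠ 0) then 1 else 0 := by
    rw [Finset.mul_sum]
    exact Finset.sum_congr rfl fun i _ => by split <;> simp
  rw [hmul]
  congr 1
  rw [db, ← hz, wtb, Finset.card_filter]
  exact Fin.sum_univ_eq_sum_range
    (fun i => if (∃ k : Fin b, cget z (i + k) ≠ 0) then 1 else 0) n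

/-- Lemma 5.1: if `C ⊆ Fq^n` has size `M` and minimum `b`-symbol distance `d`, and
`C_H` is its concatenation with the `q`-ary simplex code `[(q^b-1)/(q-1), b, q^{b-1}]`
(with generator matrix `G`, so `Φ(x) = x·G` is an injective linear map whose nonzero
values have constant Hamming weight `q^{b-1}`), then `C_H` has length `(q^b-1)n/(q-1)`,
size `M`, and minimum Hamming distance `q^{b-1}·d`. -/
theorem concatenation_with_simplex {Fq : Type*} [Field Fq] [Fintype Fq] [DecidableEq Fq]
    {n b d N : ℕ} (hb1 : 1 ≤ b) (hbn : b ≤ n)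
    (hN : N = (Fintype.card Fq ^ b - 1) / (Fintype.card Fq - 1))
    (G : Fin b → Fin N → Fq)
    (hinj : Function.Injective fun x : Fin b → Fq => fun j : Fin N => ∑ i : Fin b, x i * G i j)
    (hwt : ∀ x : Fin b → Fq, x ≠ 0 →
      hammingNorm (fun j : Fin N => ∑ i : Fin b, x i * G i j) = Fintype.card Fq ^ (b - 1))
    (C : Finset (Fin n → Fq))
    (hmin : ∀ x ∈ C, ∀ y ∈ C, x ≠ y → d ≤ db b x y)
    (hex : ∃ x ∈ C, ∃ y ∈ C, x ≠ y ∧ db b x y = d) :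
    ((C.image fun c : Fin n → Fq => fun p : Fin n × Fin N =>
        ∑ i : Fin b, cget c ((p.1 : ℕ) + i) * G i p.2).card = C.card) ∧
      (∀ u ∈ (C.image fun c : Fin n → Fq => fun p : Fin n × Fin N =>
          ∑ i : Fin b, cget c ((p.1 : ℕ) + i) * G i p.2),
        ∀ v ∈ (C.image fun c : Fin n → Fq => fun p : Fin n × Fin N =>
          ∑ i : Fin b, cget c ((p.1 : ℕ) + i) * G i p.2),
        u ≠ v → Fintype.card Fq ^ (b - 1) * d ≤ hammingDist u v) ∧
      (∃ u ∈ (C.image fun c : Fin n → Fq => fun p : Fin n × Fin N =>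
          ∑ i : Fin b, cget c ((p.1 : ℕ) + i) * G i p.2),
        ∃ v ∈ (C.image fun c : Fin n → Fq => fun p : Fin n × Fin N =>
          ∑ i : Fin b, cget c ((p.1 : ℕ) + i) * G i p.2),
        u ≠ v ∧ hammingDist u v = Fintype.card Fq ^ (b - 1) * d) := by
  classical
  set Ψ : (Fin n → Fq) → (Fin n × Fin N → Fq) :=
    fun c : Fin n → Fq => fun p : Fin n × Fin N =>
      ∑ i : Fin b, cget c ((p.1 : ℕ) + i) * G i p.2 with hΨ
  have hdist : ∀ x y : Fin n → Fq, hammingDist (Ψ x) (Ψ y) = Fintype.card Fq ^ (b - 1) * db b x y :=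
    fun x y => dist_key G hwt x y
  have hPinj : Function.Injective Ψ := by
    intro x y h
    have h0 : hammingDist (Ψ x) (Ψ y) = 0 := by rw [h, hammingDist_self]
    rw [hdist] at h0
    have hq : 0 < Fintype.card Fq ^ (b - 1) := Nat.pow_pos Fintype.card_pos
    have hdb : db b x y = 0 := by
      rcases Nat.mul_eq_zero.mp h0 with h' | h'
      · omega
      · exact h'
    have := eq_of_wtb_eq_zero hb1 (x - y) hdb
    exact sub_eq_zero.mp this
  refine ⟨Finset.card_image_of_injective C hPinj, ?_, ?_⟩
  · intro u hu v hv huv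
    obtain ⟨cu, hcu, rfl⟩ := Finset.mem_image.mp hu
    obtain ⟨cv, hcv, rfl⟩ := Finset.mem_image.mp hv
    have hne : cu ≠ cv := fun h => huv (by rw [h])
    calc Fintype.card Fq ^ (b - 1) * d
        ≤ Fintype.card Fq ^ (b - 1) * db b cu cv :=
          Nat.mul_le_mul_left _ (hmin cu hcu cv hcv hne)
      _ = hammingDist (Ψ cu) (Ψ cv) := (hdist cu cv).symm
  · obtain ⟨x, hx, y, hy, hxy, hd⟩ := hex
    refine ⟨Ψ x, Finset.mem_image_of_mem _ hx, Ψ y, Finset.mem_image_of_mem _ hy,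
      fun h => hxy (hPinj h), ?_⟩
    rw [hdist, hd]
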